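/- arXiv:1410.6558 — 2 statements merged into one kernel-verified Lean document; each statement's English description precedes it below -/
import Mathlib

section
/- Let Ω ∈ ℝ^{n×d} be a general analysis operator, A_mat ∈ ℝ^{m₁×n}, B ∈ ℝ^{m₂×d}, p ≥ 1, k ≥ 1, and β, γ, ζ, ξ ≥ 0. Suppose B is such that for every z ∈ ℝ^d and every ε ≥ 0, ‖Bz‖₂ ≤ ε implies ‖z‖₂ ≤ β‖Ωz‖_p + γε. Suppose 𝒜 : ℝ^{m₁} → ℝ^n satisfies, for every α ∈ ℝ^n and every e₁ ∈ ℝ^{m₁}, ‖α − 𝒜(A_mat α + e₁)‖_p ≤ ζ‖e₁‖₂ + ξ‖α − [α]_k‖₁. Let x ∈ ℝ^d, e₁ ∈ ℝ^{m₁}, e₂ ∈ ℝ^{m₂}, y₁ = A_mat Ω x + e₁, y₂ = Bx + e₂, ŵ = 𝒜(y₁), and let x̂ be a minimizer of ‖Ω x̃ − ŵ‖_p over all x̃ ∈ ℝ^d satisfying ‖B x̃ − y₂‖₂ ≤ ‖e₂‖₂. Then ‖x̂ − x‖₂ ≤ 2β(ζ‖e₁‖₂ + ξ‖Ωx − [Ωx]_k‖₁)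 + 2γ‖e₂‖₂. -/
open Matrix

/-- The Euclidean (ℓ₂) norm of a finitely-indexed real vector. -/
noncomputable def l2norm {ι : Type*} [Fintype ι] (v : ι → ℝ) : ℝ :=
  Real.sqrt (∑ i, v i ^ 2)

/-- The ℓ₁ norm of a finitely-indexed real vector. -/
def l1norm {ι : Type*} [Fintype ι] (v : ι → ℝ) : ℝ :=
  ∑ i, |v i|

/-- The ℓ_p norm of a finitely-indexed real vector. -/
noncomputable def lpnorm {ι : Type*} [Fintype ι] (p : ℝ) (v : ι → ℝ) : ℝ :=
  (∑ i, |v i| ^ p) ^ (1 / p)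

/-- `αk` is a best `k`-term approximation of `α`: it keeps the `k`
largest-magnitude entries of `α` and sets the others to zero. -/
def IsBestKTermApprox {ι : Type*} [Fintype ι] [DecidableEq ι] (k : ℕ)
    (α αk : ι → ℝ) : Prop :=
  ∃ S : Finset ι, S.card = min k (Fintype.card ι) ∧
    (∀ i, αk i = if i ∈ S then α i else 0) ∧
    ∀ i ∈ S, ∀ j ∉ S, |α j| ≤ |α i|

lemma l2norm_nonneg {ι : Type*} [Fintype ι] (v : ι → ℝ) : 0 ≤ l2norm v :=
  Real.sqrt_nonneg _

lemma l2norm_neg {ι : Type*} [Fintype ι] (v : ι → ℝ) : l2norm (-v) = l2norm v := by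
  simp [l2norm]

lemma l2norm_add_le {ι : Type*} [Fintype ι] (a b : ι → ℝ) :
    l2norm (a + b) ≤ l2norm a + l2norm b := by
  have h : ∀ v : ι → ℝ, l2norm v = ‖(WithLp.equiv 2 (ι → ℝ)).symm v‖ := by
    intro v
    rw [EuclideanSpace.norm_eq]
    simp [l2norm, sq_abs]
  rw [h, h, h]
  exact norm_add_le ((WithLp.equiv 2 (ι → ℝ)).symm a) ((WithLp.equiv 2 (ι → ℝ)).symm b)

lemma lpnorm_neg {ι : Type*} [Fintype ι] (p : ℝ) (v : ι → ℝ) :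
    lpnorm p (-v) = lpnorm p v := by
  simp [lpnorm]

lemma lpnorm_add_le {ι : Type*} [Fintype ι] {p : ℝ} (hp : 1 ≤ p) (a b : ι → ℝ) :
    lpnorm p (a + b) ≤ lpnorm p a + lpnorm p b := by
  simpa [lpnorm] using Real.Lp_add_le Finset.univ a b hp

/-- stable signal recovery from samples of a general
analysis operator in the transform domain. -/
theorem stmt_2 {n d m₁ m₂ : ℕ} (k : ℕ) (hk : 1 ≤ k) (p : ℝ) (hp : 1 ≤ p)
    (Ω : Matrix (Fin n) (Fin d) ℝ)
    (Amat : Matrix (Fin m₁) (Fin n) ℝ) (B : Matrix (Fin m₂) (Fin d) ℝ)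
    (β γ ζ ξ : ℝ) (hβ : 0 ≤ β) (hγ : 0 ≤ γ) (hζ : 0 ≤ ζ) (hξ : 0 ≤ ξ)
    (hB : ∀ (z : Fin d → ℝ) (ε : ℝ), 0 ≤ ε → l2norm (B.mulVec z) ≤ ε →
      l2norm z ≤ β * lpnorm p (Ω.mulVec z) + γ * ε)
    (Arec : (Fin m₁ → ℝ) → (Fin n → ℝ))
    (hArec : ∀ (α : Fin n → ℝ) (e₁ : Fin m₁ → ℝ) (αk : Fin n → ℝ),
      IsBestKTermApprox k α αk →
      lpnorm p (α - Arec (Amat.mulVec α + e₁)) ≤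
        ζ * l2norm e₁ + ξ * l1norm (α - αk))
    (x : Fin d → ℝ) (e₁ : Fin m₁ → ℝ) (e₂ : Fin m₂ → ℝ)
    (y₁ : Fin m₁ → ℝ) (hy₁ : y₁ = Amat.mulVec (Ω.mulVec x) + e₁)
    (y₂ : Fin m₂ → ℝ) (hy₂ : y₂ = B.mulVec x + e₂)
    (wHat : Fin n → ℝ) (hwHat : wHat = Arec y₁)
    (xHat : Fin d → ℝ)
    (hfeas : l2norm (B.mulVec xHat - y₂) ≤ l2norm e₂)
    (hmin : ∀ xTil : Fin d → ℝ, l2norm (B.mulVec xTil - y₂) ≤ l2norm e₂ →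
      lpnorm p (Ω.mulVec xHat - wHat) ≤ lpnorm p (Ω.mulVec xTil - wHat))
    (wk : Fin n → ℝ) (hwk : IsBestKTermApprox k (Ω.mulVec x) wk) :
    l2norm (xHat - x) ≤
      2 * β * (ζ * l2norm e₁ + ξ * l1norm (Ω.mulVec x - wk)) +
        2 * γ * l2norm e₂ := by
  -- abbreviations
  set D := ζ * l2norm e₁ + ξ * l1norm (Ω.mulVec x - wk) with hD
  -- x is feasible
  have hxfeas : l2norm (B.mulVec x - y₂) ≤ l2norm e₂ := by
    have : B.mulVec x - y₂ = -e₂ := by rw [hy₂]; abel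
    rw [this, l2norm_neg]
  -- recovery bound on Ω x
  have hrec : lpnorm p (Ω.mulVec x - wHat) ≤ D := by
    rw [hwHat, hy₁]
    exact hArec (Ω.mulVec x) e₁ wk hwk
  -- minimality
  have hminx : lpnorm p (Ω.mulVec xHat - wHat) ≤ D :=
    le_trans (hmin x hxfeas) hrec
  -- bound ‖Ω(xHat - x)‖_p
  have hΩ : lpnorm p (Ω.mulVec (xHat - x)) ≤ 2 * D := by
    have heq : Ω.mulVec (xHat - x) =
        (Ω.mulVec xHat - wHat) + -(Ω.mulVec x - wHat) := by
      rw [Matrix.mulVec_sub]; abel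
    calc lpnorm p (Ω.mulVec (xHat - x))
        ≤ lpnorm p (Ω.mulVec xHat - wHat) + lpnorm p (-(Ω.mulVec x - wHat)) := by
          rw [heq]; exact lpnorm_add_le hp _ _
      _ = lpnorm p (Ω.mulVec xHat - wHat) + lpnorm p (Ω.mulVec x - wHat) := by
          rw [lpnorm_neg]
      _ ≤ D + D := add_le_add hminx hrec
      _ = 2 * D := by ring
  -- bound ‖B(xHat - x)‖₂
  have hBz : l2norm (B.mulVec (xHat - x)) ≤ 2 * l2norm e₂ := by
    have heq : B.mulVec (xHat - x) = (B.mulVec xHat - y₂) + (y₂ - B.mulVec x) := by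
      rw [Matrix.mulVec_sub]; abel
    have h2 : y₂ - B.mulVec x = e₂ := by rw [hy₂]; abel
    calc l2norm (B.mulVec (xHat - x))
        ≤ l2norm (B.mulVec xHat - y₂) + l2norm (y₂ - B.mulVec x) := by
          rw [heq]; exact l2norm_add_le _ _
      _ ≤ l2norm e₂ + l2norm e₂ := by rw [h2]; exact add_le_add hfeas le_rfl
      _ = 2 * l2norm e₂ := by ring
  -- apply hB
  have hmain := hB (xHat - x) (2 * l2norm e₂)
    (by have := l2norm_nonneg e₂; linarith) hBz
  calc l2norm (xHat - x)
      ≤ β * lpnorm p (Ω.mulVec (xHat - x)) + γ * (2 * l2norm e₂) := hmain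
    _ ≤ β * (2 * D) + γ * (2 * l2norm e₂) := by
        have := mul_le_mul_of_nonneg_left hΩ hβ
        linarith
    _ = 2 * β * D + 2 * γ * l2norm e₂ := by ring
end

section
/- Let Ω ∈ ℝ^{n×d} and Ω̃ ∈ ℝ^{ñ×d} be matrices such that the stacked matrix Ω_F = [Ω; Ω̃] ∈ ℝ^{(n+ñ)×d} is a frame with lower frame bound A > 0. Let B ∈ ℝ^{m₂×d} satisfy ‖B Ω̃† v‖₂ ≥ C₁₁‖v‖₂ for all v ∈ ℝ^{ñ} and ‖B(I − Ω̃†Ω̃)z‖₂ ≤ C₁₂‖z‖₂ for all z ∈ ℝ^d, where C₁₁ > 0 and C₁₂ ≥ 0. Then for every z ∈ ℝ^d, (1 − C₁₂/(A·C₁₁))·‖z‖₂ ≤ (1/A)·‖Ωz‖₂ + (1/(A·C₁₁))·‖Bz‖₂. -/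
open Matrix

lemma l2norm_eq_norm {ι : Type*} [Fintype ι] (v : ι → ℝ) :
    l2norm v = ‖(WithLp.equiv 2 (ι → ℝ)).symm v‖ := by
  rw [EuclideanSpace.norm_eq]
  simp [l2norm, Real.norm_eq_abs, sq_abs]

lemma l2norm_sub_le {ι : Type*} [Fintype ι] (u v : ι → ℝ) :
    l2norm (u - v) ≤ l2norm u + l2norm v := by
  simp only [l2norm_eq_norm]
  exact norm_sub_le _ _

lemma l2norm_elim_le {ι κ : Type*} [Fintype ι] [Fintype κ] (u : ι → ℝ) (v : κ → ℝ) :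
    l2norm (Sum.elim u v) ≤ l2norm u + l2norm v := by
  unfold l2norm
  rw [Fintype.sum_sum_type]
  simp only [Sum.elim_inl, Sum.elim_inr]
  have h1 : 0 ≤ ∑ i, u i ^ 2 := Finset.sum_nonneg fun i _ => sq_nonneg _
  have h2 : 0 ≤ ∑ i, v i ^ 2 := Finset.sum_nonneg fun i _ => sq_nonneg _
  nlinarith [Real.sq_sqrt h1, Real.sq_sqrt h2, Real.sqrt_nonneg (∑ i, u i ^ 2),
    Real.sqrt_nonneg (∑ i, v i ^ 2), Real.sqrt_nonneg (∑ i, u i ^ 2 + ∑ i, v i ^ 2),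
    Real.sq_sqrt (add_nonneg h1 h2),
    mul_nonneg (Real.sqrt_nonneg (∑ i, u i ^ 2)) (Real.sqrt_nonneg (∑ i, v i ^ 2))]

/-- `P` is the Moore–Penrose pseudo-inverse of `Ω` (the four Penrose conditions). -/
def IsMoorePenroseInv {ι κ : Type*} [Fintype ι] [Fintype κ]
    (Ω : Matrix ι κ ℝ) (P : Matrix κ ι ℝ) : Prop :=
  Ω * P * Ω = Ω ∧ P * Ω * P = P ∧ (Ω * P)ᵀ = Ω * P ∧ (P * Ω)ᵀ = P * Ω

/-- the key inequality behind the partial-frame recovery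
guarantee. -/
theorem stmt_6 {n nt d m₂ : ℕ}
    (Ω : Matrix (Fin n) (Fin d) ℝ) (Ωtil : Matrix (Fin nt) (Fin d) ℝ)
    (A : ℝ) (hA : 0 < A)
    -- The stacked matrix Ω_F = [Ω; Ω̃] is a frame with lower frame bound A:
    (hframe : ∀ z : Fin d → ℝ,
      A * l2norm z ≤ l2norm (Sum.elim (Ω.mulVec z) (Ωtil.mulVec z)))
    (P : Matrix (Fin d) (Fin nt) ℝ) (hP : IsMoorePenroseInv Ωtil P)
    (B : Matrix (Fin m₂) (Fin d) ℝ)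
    (C₁₁ C₁₂ : ℝ) (hC₁₁ : 0 < C₁₁) (hC₁₂ : 0 ≤ C₁₂)
    -- σ_min(B Ω̃†) ≥ C₁₁:
    (hBP : ∀ v : Fin nt → ℝ, C₁₁ * l2norm v ≤ l2norm (B.mulVec (P.mulVec v)))
    -- ‖B (I − Ω̃† Ω̃)‖ ≤ C₁₂:
    (hBI : ∀ z : Fin d → ℝ,
      l2norm (B.mulVec (z - P.mulVec (Ωtil.mulVec z))) ≤ C₁₂ * l2norm z) :
    ∀ z : Fin d → ℝ,
      (1 - C₁₂ / (A * C₁₁)) * l2norm z ≤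
        (1 / A) * l2norm (Ω.mulVec z) + (1 / (A * C₁₁)) * l2norm (B.mulVec z) := by
  intro z
  have h1 := hframe z
  have h2 := l2norm_elim_le (Ω.mulVec z) (Ωtil.mulVec z)
  have h3 := hBP (Ωtil.mulVec z)
  have h4 := hBI z
  have heq : B.mulVec (P.mulVec (Ωtil.mulVec z)) =
      B.mulVec z - B.mulVec (z - P.mulVec (Ωtil.mulVec z)) := by
    rw [Matrix.mulVec_sub]; abel
  rw [heq] at h3
  have h5 := l2norm_sub_le (B.mulVec z) (B.mulVec (z - P.mulVec (Ωtil.mulVec z)))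
  have hz := l2norm_nonneg z
  have hB := l2norm_nonneg (B.mulVec z)
  have hΩ := l2norm_nonneg (Ω.mulVec z)
  have hΩt := l2norm_nonneg (Ωtil.mulVec z)
  have hAC : (0:ℝ) < A * C₁₁ := by positivity
  rw [← mul_le_mul_iff_right₀ hAC]
  have key : A * C₁₁ * l2norm z ≤
      C₁₁ * l2norm (Ω.mulVec z) + (l2norm (B.mulVec z) + C₁₂ * l2norm z) := by
    nlinarith [mul_le_mul_of_nonneg_left (h1.trans h2) hC₁₁.le]
  have e1 : A * C₁₁ * ((1 - C₁₂ / (A * C₁₁)) * l2norm z) =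
      (A * C₁₁ - C₁₂) * l2norm z := by field_simp
  have e2 : A * C₁₁ * ((1 / A) * l2norm (Ω.mulVec z) +
      (1 / (A * C₁₁)) * l2norm (B.mulVec z)) =
      C₁₁ * l2norm (Ω.mulVec z) + l2norm (B.mulVec z) := by field_simp
  rw [e1, e2]
  linarith [key]
end
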